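/- Optimal execution cost value: Let M be a symmetric positive-definite real (N+1)×(N+1) matrix, 𝟙 the all-ones vector, X₀ ∈ ℝ, and ξ* := −(X₀/(𝟙ᵀM⁻¹𝟙))·M⁻¹𝟙. Then ξ*ᵀMξ* = X₀²/(𝟙ᵀM⁻¹𝟙); in particular the minimum of ξᵀMξ over all ξ with ∑_{k=0}^{N} ξ_k = −X₀ equals X₀²/(𝟙ᵀM⁻¹𝟙). -/

import Mathlib

open Matrix

theorem optimal_execution_cost_value
    (N : ℕ) (M : Matrix (Fin (N + 1)) (Fin (N + 1)) ℝ)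
    (hsymm : M.IsSymm) (hpd : M.PosDef) (X₀ : ℝ)
    (one : Fin (N + 1) → ℝ) (hone : one = fun _ => 1)
    (ξstar : Fin (N + 1) → ℝ)
    (hξstar : ξstar = fun i => -(X₀ / (one ⬝ᵥ (M⁻¹ *ᵥ one))) * (M⁻¹ *ᵥ one) i) :
    ξstar ⬝ᵥ (M *ᵥ ξstar) = X₀ ^ 2 / (one ⬝ᵥ (M⁻¹ *ᵥ one)) ∧
    IsLeast ((fun ξ : Fin (N + 1) → ℝ => ξ ⬝ᵥ (M *ᵥ ξ)) ''
        {ξ : Fin (N + 1) → ℝ | ∑ k, ξ k = -X₀})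
      (X₀ ^ 2 / (one ⬝ᵥ (M⁻¹ *ᵥ one))) := by
  set w : Fin (N + 1) → ℝ := M⁻¹ *ᵥ one with hw
  set c : ℝ := one ⬝ᵥ w with hc
  have hone0 : one ≠ 0 := by
    rw [hone]; intro h; simpa using congrFun h 0
  have hcpos : 0 < c := by
    have := hpd.inv.dotProduct_mulVec_pos hone0
    simpa [hc, hw] using this
  have hMw : M *ᵥ w = one := by
    rw [hw, mulVec_mulVec, Matrix.mul_nonsing_inv M (isUnit_iff_ne_zero.mpr hpd.det_pos.ne'), one_mulVec]
  have hwMw : w ⬝ᵥ (M *ᵥ w) = c := by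
    rw [hMw, dotProduct_comm]
  -- value at ξstar
  have hval : ξstar ⬝ᵥ (M *ᵥ ξstar) = X₀ ^ 2 / c := by
    have hsmul : ξstar = (-(X₀ / c)) • w := by
      funext i; simp [hξstar, hc, hw, Pi.smul_apply, smul_eq_mul]
    rw [hsmul, mulVec_smul, smul_dotProduct, dotProduct_smul, hwMw]
    field_simp
    ring_nf
    rw [mul_comm (c ^ 2 * X₀ ^ 2), ← mul_assoc, ← mul_pow, inv_mul_cancel₀ hcpos.ne', one_pow, one_mul]
  -- sum of ξstar
  have hsum : ∑ k, ξstar k = -X₀ := by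
    have : ∑ k, ξstar k = -(X₀ / c) * (one ⬝ᵥ w) := by
      rw [hξstar, dotProduct, Finset.mul_sum]
      congr 1; funext k; rw [hone]; ring
    rw [this, ← hc]; field_simp
  refine ⟨hval, ⟨⟨ξstar, hsum, hval⟩, ?_⟩⟩
  rintro v ⟨ξ, hξ, rfl⟩
  -- lower bound
  set η : Fin (N + 1) → ℝ := ξ - ξstar with hη
  have hsumη : one ⬝ᵥ η = 0 := by
    have : one ⬝ᵥ η = ∑ k, ξ k - ∑ k, ξstar k := by
      simp [hη, hone, dotProduct, Finset.sum_sub_distrib]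
    rw [this, hξ, hsum]; ring
  have hcross : ξstar ⬝ᵥ (M *ᵥ η) = 0 := by
    have h1 : w ⬝ᵥ (M *ᵥ η) = 0 := by
      rw [dotProduct_mulVec, ← mulVec_transpose, hsymm.eq, hMw, hsumη]
    have hsmul : ξstar = (-(X₀ / c)) • w := by
      funext i; simp [hξstar, hc, hw, Pi.smul_apply, smul_eq_mul]
    rw [hsmul, smul_dotProduct, h1, smul_zero]
  have hcross' : η ⬝ᵥ (M *ᵥ ξstar) = 0 := by
    rw [dotProduct_mulVec, ← mulVec_transpose, hsymm.eq, dotProduct_comm]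
    exact hcross
  have hηM : 0 ≤ η ⬝ᵥ (M *ᵥ η) := by
    have := hpd.posSemidef.dotProduct_mulVec_nonneg η
    simpa using this
  have hexp : ξ ⬝ᵥ (M *ᵥ ξ)
      = ξstar ⬝ᵥ (M *ᵥ ξstar) + ξstar ⬝ᵥ (M *ᵥ η) + η ⬝ᵥ (M *ᵥ ξstar) + η ⬝ᵥ (M *ᵥ η) := by
    have : ξ = ξstar + η := by funext i; simp [hη]
    rw [this, mulVec_add, add_dotProduct, dotProduct_add, dotProduct_add]
    ring
  rw [← hval]
  show _ ≤ ξ ⬝ᵥ (M *ᵥ ξ)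
  rw [hexp, hcross, hcross']
  linarith
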